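/- If |u| < 1/√ε and 0 < p'(ρ) < 1/ε, then λ₊ − λ₋ > 0, where λ₋ = (u − √(p'(ρ)))/(1 − ε u √(p'(ρ))) and λ₊ = (u + √(p'(ρ)))/(1 + ε u √(p'(ρ))). In particular the relativistic Euler system is strictly hyperbolic in the region {|u| < 1/√ε, 0 < ρ < ρ_max^ε}. -/

import Mathlib

/-- Strict hyperbolicity: if `|u| < 1/√ε` and `0 < p' < 1/ε` then `λ₋ < λ₊`. -/
theorem stmt2 (ε u pr : ℝ) (hε : 0 < ε) (hpr : 0 < pr) (h1 : ε * pr < 1)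
    (hu : |u| < 1 / Real.sqrt ε) :
    (u - Real.sqrt pr) / (1 - ε * u * Real.sqrt pr) <
      (u + Real.sqrt pr) / (1 + ε * u * Real.sqrt pr) := by
  set s := Real.sqrt pr with hsdef
  have hs : 0 < s := Real.sqrt_pos.mpr hpr
  have hse : 0 < Real.sqrt ε := Real.sqrt_pos.mpr hε
  have hs2 : s ^ 2 = pr := Real.sq_sqrt hpr.le
  have he2 : Real.sqrt ε ^ 2 = ε := Real.sq_sqrt hε.le
  have hu2 : u ^ 2 < 1 / ε := by
    have := sq_lt_sq' (neg_lt_of_abs_lt hu) (lt_of_abs_lt hu)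
    calc u ^ 2 < (1 / Real.sqrt ε) ^ 2 := this
      _ = 1 / ε := by rw [div_pow, one_pow, he2]
  have key : |ε * u * s| < 1 := by
    have h1' : ε * |u| < Real.sqrt ε := by
      have : ε * |u| < ε * (1 / Real.sqrt ε) :=
        mul_lt_mul_of_pos_left hu hε
      calc ε * |u| < ε * (1 / Real.sqrt ε) := this
        _ = Real.sqrt ε := by field_simp; exact he2.symm
    have h2' : Real.sqrt ε * s < 1 := by
      nlinarith [sq_nonneg (Real.sqrt ε * s - 1), sq_nonneg (Real.sqrt ε * s)]
    calc |ε * u * s| = ε * |u| * s := by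
          rw [abs_mul, abs_mul, abs_of_pos hε, abs_of_pos hs]
      _ < Real.sqrt ε * s := by nlinarith
      _ < 1 := h2'
  obtain ⟨k1, k2⟩ := abs_lt.mp key
  have d1 : 0 < 1 - ε * u * s := by linarith
  have d2 : 0 < 1 + ε * u * s := by linarith
  have hεu2 : ε * u ^ 2 < 1 := by
    have h := mul_lt_mul_of_pos_left hu2 hε
    rwa [mul_one_div, div_self hε.ne'] at h
  rw [div_lt_div_iff₀ d1 d2]
  nlinarith [mul_pos hε hs, hεu2]
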